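/- Let p = (a,b,c,d,t) ∈ ℂ⁵ be a point at which m₁, m₂, m₃ all vanish. If p does not satisfy all of the equations A = 0, B = 0, D = 0, and C·(C + T⁵) = 0 (i.e., if p lies outside the set V(A, B, D, C·(C + T⁵))), then the 3×5 Jacobian matrix (∂mᵢ/∂xⱼ)(p), where (x₁,...,x₅) = (A,B,C,D,T), has rank at least 2 at p. -/

import Mathlib

open MvPolynomial

/-- Variables: `A = X 0`, `B = X 1`, `C = X 2`, `D = X 3`, `T = X 4`. -/
noncomputable def m₁ : MvPolynomial (Fin 5) ℂ :=
  ((X 0) ^ 2 + (X 4) ^ 5) * (X 0) ^ 2 - X 1 * X 2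

noncomputable def m₂ : MvPolynomial (Fin 5) ℂ :=
  ((X 0) ^ 2 + (X 4) ^ 5) * ((X 1) ^ 2 - X 3) - X 2 * X 3

noncomputable def m₃ : MvPolynomial (Fin 5) ℂ :=
  X 1 * ((X 1) ^ 2 - X 3) - (X 0) ^ 2 * X 3

/-- The ideal generated by the three 2×2 minors of
`[[A² + T⁵, B, D], [C, A², B² − D]]`. -/
noncomputable def I_T : Ideal (MvPolynomial (Fin 5) ℂ) :=
  Ideal.span {m₁, m₂, m₃}

/-- The 3×5 Jacobian matrix of `(m₁, m₂, m₃)` evaluated at a point `p ∈ ℂ⁵`. -/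
noncomputable def jacobianAt (p : Fin 5 → ℂ) : Matrix (Fin 3) (Fin 5) ℂ :=
  Matrix.of fun i j => eval p (pderiv j (![m₁, m₂, m₃] i))

/-- A 3×5 matrix with a nonvanishing 2×2 minor has rank at least 2. -/
lemma rank_ge_two_of_minor {M : Matrix (Fin 3) (Fin 5) ℂ} (i i' : Fin 3) (j j' : Fin 5)
    (h : M i j * M i' j' - M i j' * M i' j ≠ 0) : 2 ≤ M.rank := by
  set N : Matrix (Fin 2) (Fin 2) ℂ := M.submatrix ![i, i'] ![j, j'] with hN
  have hdet : N.det ≠ 0 := by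
    rw [Matrix.det_fin_two]
    simpa [hN] using h
  have hNr : N.rank = 2 := by
    rw [Matrix.rank_of_isUnit N ((Matrix.isUnit_iff_isUnit_det N).mpr hdet.isUnit)]
    simp
  have key : N = ((1 : Matrix (Fin 3) (Fin 3) ℂ).submatrix ![i, i'] (Equiv.refl _)) * M
      * ((1 : Matrix (Fin 5) (Fin 5) ℂ).submatrix (Equiv.refl _) ![j, j']) := by
    rw [Matrix.mul_submatrix_one, Matrix.one_submatrix_mul]
    ext a b; fin_cases a <;> rfl
  calc 2 = N.rank := hNr.symm
    _ ≤ _ := by rw [key]; exact le_trans (Matrix.rank_mul_le_left _ _) (Matrix.rank_mul_le_right _ _)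

/-- If `p = (a,b,c,d,t) ∈ ℂ⁵` is a common zero of `m₁, m₂, m₃` lying outside
`V(A, B, D, C·(C + T⁵))`, then the Jacobian matrix of `(m₁,m₂,m₃)` at `p` has
rank at least 2. -/
theorem stmt_10 (p : Fin 5 → ℂ)
    (h₁ : eval p m₁ = 0) (h₂ : eval p m₂ = 0) (h₃ : eval p m₃ = 0)
    (hout : ¬ (p 0 = 0 ∧ p 1 = 0 ∧ p 3 = 0 ∧ p 2 * (p 2 + (p 4) ^ 5) = 0)) :
    2 ≤ (jacobianAt p).rank := by
  simp only [m₁, m₂, m₃, map_sub, map_add, map_mul, map_pow, eval_X] at h₁ h₂ h₃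
  have e00 : jacobianAt p 0 0 = 4 * p 0 ^ 3 + 2 * p 4 ^ 5 * p 0 := by
    simp [jacobianAt, m₁, m₂, m₃, pderiv_mul, pderiv_pow, pderiv_X]; ring
  have e01 : jacobianAt p 0 1 = -(p 2) := by
    simp [jacobianAt, m₁, m₂, m₃, pderiv_mul, pderiv_pow, pderiv_X]
  have e02 : jacobianAt p 0 2 = -(p 1) := by
    simp [jacobianAt, m₁, m₂, m₃, pderiv_mul, pderiv_pow, pderiv_X]
  have e03 : jacobianAt p 0 3 = 0 := by
    simp [jacobianAt, m₁, m₂, m₃, pderiv_mul, pderiv_pow, pderiv_X]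
  have e11 : jacobianAt p 1 1 = 2 * p 1 * (p 0 ^ 2 + p 4 ^ 5) := by
    simp [jacobianAt, m₁, m₂, m₃, pderiv_mul, pderiv_pow, pderiv_X]; ring
  have e12 : jacobianAt p 1 2 = -(p 3) := by
    simp [jacobianAt, m₁, m₂, m₃, pderiv_mul, pderiv_pow, pderiv_X]
  have e13 : jacobianAt p 1 3 = -(p 0 ^ 2 + p 4 ^ 5) - p 2 := by
    simp [jacobianAt, m₁, m₂, m₃, pderiv_mul, pderiv_pow, pderiv_X]
  have e20 : jacobianAt p 2 0 = -(2 * p 0 * p 3) := by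
    simp [jacobianAt, m₁, m₂, m₃, pderiv_mul, pderiv_pow, pderiv_X]; ring
  have e21 : jacobianAt p 2 1 = 3 * p 1 ^ 2 - p 3 := by
    simp [jacobianAt, m₁, m₂, m₃, pderiv_mul, pderiv_pow, pderiv_X]; ring
  have e22 : jacobianAt p 2 2 = 0 := by
    simp [jacobianAt, m₁, m₂, m₃, pderiv_mul, pderiv_pow, pderiv_X]
  have e23 : jacobianAt p 2 3 = -(p 1) - p 0 ^ 2 := by
    simp [jacobianAt, m₁, m₂, m₃, pderiv_mul, pderiv_pow, pderiv_X]
  by_cases hb : p 1 = 0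
  · by_cases hd : p 3 = 0
    · by_cases ha : p 0 = 0
      · -- a = b = d = 0 : use rows 0,1 and columns 1,3
        push_neg at hout
        have hc := hout ha hb hd
        apply rank_ge_two_of_minor 0 1 1 3
        rw [e01, e13, e03, e11, ha]
        intro hcon
        exact hc (by linear_combination hcon)
      · -- b = d = 0, a ≠ 0 : use rows 0,2 and columns 0,3
        have ht : (p 4) ^ 5 = -(p 0) ^ 2 := by
          rw [hb] at h₁
          have h' : ((p 0) ^ 2 + (p 4) ^ 5) * (p 0) ^ 2 = 0 := by linear_combination h₁
          rcases mul_eq_zero.mp h' with h'' | h''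
          · linear_combination h''
          · exact absurd (pow_eq_zero_iff (two_ne_zero) |>.mp h'') ha
        apply rank_ge_two_of_minor 0 2 0 3
        rw [e00, e23, e03, e20, hb, ht]
        intro hcon
        apply ha
        have h5 : p 0 ^ 5 = 0 := by linear_combination (-1/2 : ℂ) * hcon
        exact pow_eq_zero_iff (by norm_num) |>.mp h5
    · -- b = 0, d ≠ 0 : use rows 1,2 and columns 1,2
      apply rank_ge_two_of_minor 1 2 1 2
      rw [e11, e22, e12, e21, hb]
      intro hcon
      apply hd
      have h2 : p 3 ^ 2 = 0 := by linear_combination -hcon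
      exact pow_eq_zero_iff (two_ne_zero) |>.mp h2
  · by_cases h3b : 3 * (p 1) ^ 2 - p 3 = 0
    · -- b ≠ 0, d = 3b² : use rows 0,2 and columns 2,3
      have hba : p 1 + (p 0) ^ 2 ≠ 0 := by
        intro hcon
        have hd3 : p 3 = 3 * (p 1) ^ 2 := by linear_combination -h3b
        have hkey : (p 1) ^ 2 * (2 * p 1 + 3 * (p 0) ^ 2) = 0 := by
          rw [hd3] at h₃; linear_combination -h₃
        rcases mul_eq_zero.mp hkey with h' | h'
        · exact hb (pow_eq_zero_iff (two_ne_zero) |>.mp h')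
        · exact hb (by linear_combination 3 * hcon - h')
      apply rank_ge_two_of_minor 0 2 2 3
      rw [e02, e23, e03, e22]
      intro hcon
      rcases mul_eq_zero.mp (show p 1 * (p 1 + p 0 ^ 2) = 0 by linear_combination hcon) with h' | h'
      · exact hb h'
      · exact hba h'
    · -- b ≠ 0, 3b² ≠ d : use rows 0,2 and columns 1,2
      apply rank_ge_two_of_minor 0 2 1 2
      rw [e01, e22, e02, e21]
      intro hcon
      rcases mul_eq_zero.mp (show p 1 * (3 * p 1 ^ 2 - p 3) = 0 by linear_combination hcon) with h' | h'
      · exact hb h'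
      · exact h3b h'
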